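/- Let θ = arccos√(1/2 + 1/√5), and define unit vectors |A₀⟩ = (cosθ, sinθ), |B₀⟩ = (cosθ, −sinθ) in ℝ², and |Au⟩ = (1/√3)(((√5−1)/2)|00⟩ + ((√5+1)/2)|11⟩). Then |⟨A₀ ⊗ B₀ | Au⟩|² = 1/12. -/
import Mathlib


theorem stmt_11 (θ : ℝ) (hθ : θ = Real.arccos (Real.sqrt (1 / 2 + 1 / Real.sqrt 5)))
    (A₀ B₀ : Fin 2 → ℝ)
    (hA₀ : A₀ = ![Real.cos θ, Real.sin θ])
    (hB₀ : B₀ = ![Real.cos θ, -Real.sin θ])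
    (Au : Fin 2 × Fin 2 → ℝ)
    (hAu : Au = fun p =>
      if p = (0, 0) then (1 / Real.sqrt 3) * ((Real.sqrt 5 - 1) / 2)
      else if p = (1, 1) then (1 / Real.sqrt 3) * ((Real.sqrt 5 + 1) / 2)
      else 0) :
    (∑ p : Fin 2 × Fin 2, A₀ p.1 * B₀ p.2 * Au p) ^ 2 = 1 / 12 := by
  have h5 : (2:ℝ) ≤ Real.sqrt 5 := by
    rw [show (2:ℝ) = Real.sqrt 4 by
      rw [show (4:ℝ) = 2^2 by norm_num, Real.sqrt_sq (by norm_num)]]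
    exact Real.sqrt_le_sqrt (by norm_num)
  have h5pos : (0:ℝ) < Real.sqrt 5 := by linarith
  have h5sq : Real.sqrt 5 ^ 2 = 5 := Real.sq_sqrt (by norm_num)
  have h3pos : (0:ℝ) < Real.sqrt 3 := Real.sqrt_pos.mpr (by norm_num)
  have h3sq : Real.sqrt 3 ^ 2 = 3 := Real.sq_sqrt (by norm_num)
  have hxnn : (0:ℝ) ≤ 1 / 2 + 1 / Real.sqrt 5 := by positivity
  have hxle : 1 / 2 + 1 / Real.sqrt 5 ≤ 1 := by
    have : 1 / Real.sqrt 5 ≤ 1 / 2 := by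
      rw [div_le_div_iff₀ h5pos (by norm_num)]; linarith
    linarith
  have hle1 : Real.sqrt (1 / 2 + 1 / Real.sqrt 5) ≤ 1 := by
    exact Real.sqrt_le_one.mpr hxle
  have hcos : Real.cos θ = Real.sqrt (1 / 2 + 1 / Real.sqrt 5) := by
    rw [hθ]
    exact Real.cos_arccos (by linarith [Real.sqrt_nonneg (1 / 2 + 1 / Real.sqrt 5)]) hle1
  have hc2 : Real.cos θ ^ 2 = 1 / 2 + 1 / Real.sqrt 5 := by
    rw [hcos, Real.sq_sqrt hxnn]
  have hs2 : Real.sin θ ^ 2 = 1 / 2 - 1 / Real.sqrt 5 := by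
    have h := Real.sin_sq_add_cos_sq θ
    linarith
  subst hA₀ hB₀ hAu
  rw [show (∑ p : Fin 2 × Fin 2, ![Real.cos θ, Real.sin θ] p.1 *
      ![Real.cos θ, -Real.sin θ] p.2 * (fun p : Fin 2 × Fin 2 =>
      if p = (0, 0) then (1 / Real.sqrt 3) * ((Real.sqrt 5 - 1) / 2)
      else if p = (1, 1) then (1 / Real.sqrt 3) * ((Real.sqrt 5 + 1) / 2)
      else 0) p) =
      Real.cos θ ^ 2 * ((1 / Real.sqrt 3) * ((Real.sqrt 5 - 1) / 2)) -
      Real.sin θ ^ 2 * ((1 / Real.sqrt 3) * ((Real.sqrt 5 + 1) / 2)) by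
    rw [Fintype.sum_prod_type]
    simp [Fin.sum_univ_succ]
    ring]
  rw [hc2, hs2]
  have h5ne : Real.sqrt 5 ≠ 0 := ne_of_gt h5pos
  have h3ne : Real.sqrt 3 ≠ 0 := ne_of_gt h3pos
  field_simp
  nlinarith [h3sq, h5sq, h3pos, h5pos]
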